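/- Let m and k be nonempty finite types, with a distinguished element 0 : k, and let V : Matrix (m × k) m ℂ be a matrix whose columns are orthonormal, i.e. Vᴴ * V = 1. Then there exists a unitary matrix U ∈ Matrix.unitaryGroup (m × k) ℂ such that V i j = U i (j, 0) for all i : m × k and j : m; that is, V coincides with the submatrix of U obtained by keeping only the columns indexed by pairs (j, 0). -/

import Mathlib

open scoped Matrix

/-- **Isometries extend to unitaries (Appendix C).** Every isometry
`V : Matrix (m × k) m ℂ` (i.e. `Vᴴ * V = 1`) arises as the submatrix of a unitary
`U` on `ℂ^(m × k)` consisting of the columns indexed by pairs `(j, b0)`, where `b0 : k`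
is the distinguished element; that is, `V = U (|b0⟩ ⊗ I)`. -/
theorem isometry_eq_unitary_columns
    {m k : Type*} [Fintype m] [Fintype k] [DecidableEq m] [DecidableEq k]
    [Nonempty m] [Nonempty k] (b0 : k)
    (V : Matrix (m × k) m ℂ) (hV : Vᴴ * V = 1) :
    ∃ U : Matrix (m × k) (m × k) ℂ, U ∈ Matrix.unitaryGroup (m × k) ℂ ∧
      ∀ (i : m × k) (j : m), V i j = U i (j, b0) := by
  -- the columns of `V`, spread over the index set `m × k`
  set v : m × k → EuclideanSpace ℂ (m × k) := fun p => WithLp.toLp 2 (fun i => V i p.1) with hv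
  set s : Set (m × k) := {p | p.2 = b0} with hs
  have hVentry : ∀ j j', ∑ i, (starRingEnd ℂ) (V i j) * V i j' =
      if j = j' then 1 else 0 := by
    intro j j'
    have := congrFun (congrFun hV j) j'
    simpa [Matrix.mul_apply, Matrix.conjTranspose_apply, Matrix.one_apply] using this
  have horth : Orthonormal ℂ (s.restrict v) := by
    rw [orthonormal_iff_ite]
    rintro ⟨⟨j, c⟩, hc⟩ ⟨⟨j', c'⟩, hc'⟩
    simp only [hs, Set.mem_setOf_eq] at hc hc'
    have : (inner ℂ (Set.restrict s v ⟨(j, c), hc⟩) (Set.restrict s v ⟨(j', c'), hc'⟩) : ℂ)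
        = ∑ i, (starRingEnd ℂ) (V i j) * V i j' := by
      simp [PiLp.inner_apply, RCLike.inner_apply, v, Set.restrict_apply, mul_comm]; rfl
    rw [this, hVentry]
    by_cases h : j = j' <;> simp [h, Subtype.ext_iff, Prod.ext_iff, hc, hc']
  have hcard : Module.finrank ℂ (EuclideanSpace ℂ (m × k)) = Fintype.card (m × k) :=
    finrank_euclideanSpace
  obtain ⟨b, hb⟩ := horth.exists_orthonormalBasis_extension_of_card_eq hcard
  refine ⟨Matrix.of fun i p => b p i, ?_, ?_⟩
  · rw [Matrix.mem_unitaryGroup_iff']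
    ext p q
    have := (orthonormal_iff_ite.mp b.orthonormal) p q
    have h2 : (inner ℂ (b p) (b q) : ℂ) = ∑ i, (starRingEnd ℂ) (b p i) * b q i := by
      simp [PiLp.inner_apply, RCLike.inner_apply, mul_comm]
    rw [h2] at this
    simpa [Matrix.mul_apply, Matrix.one_apply, Matrix.conjTranspose_apply] using this
  · intro i j
    have := hb (j, b0) rfl
    have := congrArg (· i) this
    simp only [v] at this
    simpa using this.symm
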